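/- Let G ∈ 𝕆^{n×k} with tr(GᵀD) ≠ 0 be a local maximizer of η on 𝕆^{n×k}. Then tr(Kᵀ(GᵀAG − M(G))K) ≥ 0 for every real skew-symmetric k×k matrix K (i.e., K = −Kᵀ). -/

import Mathlib

open Matrix Filter Set Topology


open Matrix

/-- The objective `η(G) = tr(GᵀD)² / tr(GᵀAG)`. -/
noncomputable def eta {n k : ℕ} (A : Matrix (Fin n) (Fin n) ℝ)
    (D G : Matrix (Fin n) (Fin k) ℝ) : ℝ :=
  (Matrix.trace (Gᵀ * D)) ^ 2 / Matrix.trace (Gᵀ * A * G)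

/-- `ξ(G) = tr(GᵀAG) / tr(GᵀD)`. -/
noncomputable def xi {n k : ℕ} (A : Matrix (Fin n) (Fin n) ℝ)
    (D G : Matrix (Fin n) (Fin k) ℝ) : ℝ :=
  Matrix.trace (Gᵀ * A * G) / Matrix.trace (Gᵀ * D)

/-- `sym(B) = (B + Bᵀ)/2`. -/
noncomputable def symPart {k : ℕ} (B : Matrix (Fin k) (Fin k) ℝ) : Matrix (Fin k) (Fin k) ℝ :=
  (1 / 2 : ℝ) • (B + Bᵀ)

/-- `M(G) = sym(GᵀAG − ξ(G)·GᵀD)`. -/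
noncomputable def Mmat {n k : ℕ} (A : Matrix (Fin n) (Fin n) ℝ)
    (D G : Matrix (Fin n) (Fin k) ℝ) : Matrix (Fin k) (Fin k) ℝ :=
  symPart (Gᵀ * A * G - xi A D G • (Gᵀ * D))

/-- `E(G) = A − ξ(G)·(DGᵀ + GDᵀ)`. -/
noncomputable def Emat {n k : ℕ} (A : Matrix (Fin n) (Fin n) ℝ)
    (D G : Matrix (Fin n) (Fin k) ℝ) : Matrix (Fin n) (Fin n) ℝ :=
  A - xi A D G • (D * Gᵀ + G * Dᵀ)

/-- The Frobenius norm of a real matrix. -/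
noncomputable def frobNorm {n k : ℕ} (M : Matrix (Fin n) (Fin k) ℝ) : ℝ :=
  Real.sqrt (∑ i, ∑ j, (M i j) ^ 2)

/-- `G` is a local maximizer of `η` on the Stiefel manifold `𝕆^{n×k}`. -/
def IsLocalMaxEta {n k : ℕ} (A : Matrix (Fin n) (Fin n) ℝ)
    (D G : Matrix (Fin n) (Fin k) ℝ) : Prop :=
  Gᵀ * G = 1 ∧ ∃ ε > (0 : ℝ), ∀ G' : Matrix (Fin n) (Fin k) ℝ,
    G'ᵀ * G' = 1 → frobNorm (G' - G) < ε → eta A D G' ≤ eta A D G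

section AuxLemmas

/-- derivative of `t ↦ trace (exp(tK) C)` -/
lemma hasDerivAt_traceExpMul {k : ℕ} (K C : Matrix (Fin k) (Fin k) ℝ) (t : ℝ) :
    HasDerivAt (fun t : ℝ => Matrix.trace (NormedSpace.exp (t • K) * C))
      (Matrix.trace (NormedSpace.exp (t • K) * (K * C))) t := by
  classical
  letI : NormedRing (Matrix (Fin k) (Fin k) ℝ) := Matrix.linftyOpNormedRing
  letI : NormedAlgebra ℝ (Matrix (Fin k) (Fin k) ℝ) := Matrix.linftyOpNormedAlgebra
  let L : Matrix (Fin k) (Fin k) ℝ →ₗ[ℝ] ℝ :=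
    (Matrix.traceLinearMap (Fin k) ℝ ℝ).comp (LinearMap.mulRight ℝ C)
  have hL := (LinearMap.toContinuousLinearMap L).hasFDerivAt
    (x := NormedSpace.exp (t • K))
  have key := hL.comp_hasDerivAt t (hasDerivAt_exp_smul_const K t)
  have e1 : ∀ M : Matrix (Fin k) (Fin k) ℝ,
      LinearMap.toContinuousLinearMap L M = Matrix.trace (M * C) := fun M => by
    simp [L]
  simp only [Function.comp_def, e1] at key
  refine key.congr_deriv ?_
  rw [← Matrix.mul_assoc]; rfl

lemma second_deriv_test_neg {h h' : ℝ → ℝ} {c : ℝ}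
    (hd : ∀ t, HasDerivAt h (h' t) t)
    (hd2 : HasDerivAt h' c 0)
    (hmax : IsLocalMax h 0) : c ≤ 0 := by
  by_contra hc
  push_neg at hc
  have h'0 : h' 0 = 0 := by
    have h1 := hmax.deriv_eq_zero
    rw [(hd 0).deriv] at h1
    exact h1
  have hs := hasDerivAt_iff_tendsto_slope.mp hd2
  have hev : ∀ᶠ t in 𝓝[>] (0:ℝ), 0 < slope h' 0 t := by
    have h2 : ∀ᶠ t in 𝓝[≠] (0:ℝ), 0 < slope h' 0 t :=
      hs.eventually (eventually_gt_nhds hc)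
    exact h2.filter_mono (nhdsWithin_mono _ (fun x hx => ne_of_gt hx))
  have hmax' : ∀ᶠ t in 𝓝[>] (0:ℝ), h t ≤ h 0 :=
    hmax.filter_mono nhdsWithin_le_nhds
  obtain ⟨u, hu, huI⟩ := mem_nhdsGT_iff_exists_Ioo_subset.mp (hev.and hmax')
  have hu0 : (0:ℝ) < u := hu
  have hpos : ∀ t ∈ Ioo (0:ℝ) u, 0 < h' t := by
    intro t ht
    have hsl := (huI ht).1
    rw [slope_def_field, h'0, sub_zero, sub_zero] at hsl
    have := mul_pos hsl ht.1
    rwa [div_mul_cancel₀ _ (ne_of_gt ht.1)] at this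
  have hmono : StrictMonoOn h (Icc 0 (u/2)) := by
    apply strictMonoOn_of_deriv_pos (convex_Icc _ _)
    · exact fun x _ => (hd x).continuousAt.continuousWithinAt
    · intro x hx
      rw [interior_Icc] at hx
      rw [(hd x).deriv]
      exact hpos x ⟨hx.1, lt_of_lt_of_le hx.2 (by linarith)⟩
  have hlt : h 0 < h (u/2) :=
    hmono ⟨le_refl _, by positivity⟩ ⟨by positivity, le_refl _⟩ (by positivity)
  have hle : h (u/2) ≤ h 0 := (huI ⟨by positivity, by linarith⟩).2
  linarith

/-- analytic heart: local max of `t ↦ tr(exp(tK)C)²` at `0` gives `tr(C)·tr(K(KC)) ≤ 0`. -/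
lemma key_ineq {k : ℕ} (K C : Matrix (Fin k) (Fin k) ℝ)
    (hmax : IsLocalMax (fun t : ℝ =>
      Matrix.trace (NormedSpace.exp (t • K) * C) *
      Matrix.trace (NormedSpace.exp (t • K) * C)) 0) :
    Matrix.trace C * Matrix.trace (K * (K * C)) ≤ 0 := by
  set f : ℝ → ℝ := fun t => Matrix.trace (NormedSpace.exp (t • K) * C) with hf_def
  set f₁ : ℝ → ℝ := fun t => Matrix.trace (NormedSpace.exp (t • K) * (K * C)) with hf₁_def
  have hf : ∀ t, HasDerivAt f (f₁ t) t := fun t => hasDerivAt_traceExpMul K C t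
  have hf₁ : ∀ t, HasDerivAt f₁ (Matrix.trace (NormedSpace.exp (t • K) * (K * (K * C)))) t :=
    fun t => hasDerivAt_traceExpMul K (K * C) t
  have hexp0 : NormedSpace.exp ((0:ℝ) • K) = 1 := by
    rw [zero_smul, NormedSpace.exp_zero]
  have hf0 : f 0 = Matrix.trace C := by simp [hf_def, hexp0]
  have hf₁0' : HasDerivAt f₁ (Matrix.trace (K * (K * C))) 0 := by
    have := hf₁ 0
    rwa [hexp0, Matrix.one_mul] at this
  have hd : ∀ t, HasDerivAt (fun t => f t * f t) (f₁ t * f t + f t * f₁ t) t :=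
    fun t => (hf t).mul (hf t)
  have hd2 : HasDerivAt (fun t => f₁ t * f t + f t * f₁ t)
      ((Matrix.trace (K * (K * C)) * f 0 + f₁ 0 * f₁ 0) +
       (f₁ 0 * f₁ 0 + f 0 * Matrix.trace (K * (K * C)))) 0 :=
    (hf₁0'.mul (hf 0)).add ((hf 0).mul hf₁0')
  have hc := second_deriv_test_neg hd hd2 hmax
  rw [hf0] at hc
  nlinarith [sq_nonneg (f₁ 0)]

lemma trace_conj_pos {n k : ℕ} (hk : 1 ≤ k) {A : Matrix (Fin n) (Fin n) ℝ} (hA : A.PosDef)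
    {G : Matrix (Fin n) (Fin k) ℝ} (horth : Gᵀ * G = 1) :
    0 < Matrix.trace (Gᵀ * A * G) := by
  classical
  have hdiag : ∀ j, (Gᵀ * A * G) j j =
      dotProduct (star fun i => G i j) (A *ᵥ fun i => G i j) := by
    intro j
    simp only [Matrix.mul_apply, dotProduct, Matrix.mulVec, star_trivial,
      Finset.sum_mul, Finset.mul_sum, Matrix.transpose_apply]
    rw [Finset.sum_comm]
    exact Finset.sum_congr rfl fun l _ => Finset.sum_congr rfl fun i _ => by ring
  have hnonneg : ∀ j, 0 ≤ (Gᵀ * A * G) j j := by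
    intro j
    rw [hdiag j]
    exact hA.posSemidef.dotProduct_mulVec_nonneg _
  have j₀ : Fin k := ⟨0, hk⟩
  have hcol : (fun i => G i j₀) ≠ 0 := by
    intro hcol0
    have h1 : (Gᵀ * G) j₀ j₀ = 1 := by rw [horth]; simp
    rw [Matrix.mul_apply] at h1
    simp only [Matrix.transpose_apply] at h1
    have : ∀ i, G i j₀ = 0 := fun i => congrFun hcol0 i
    simp [this] at h1
  have hpos : 0 < (Gᵀ * A * G) j₀ j₀ := by
    rw [hdiag j₀]
    exact hA.dotProduct_mulVec_pos hcol
  rw [Matrix.trace]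
  apply Finset.sum_pos' (fun j _ => hnonneg j) ⟨j₀, Finset.mem_univ _, hpos⟩

end AuxLemmas

/-- at a local maximizer `G` of `η` on `𝕆^{n×k}`,
`tr(Kᵀ(GᵀAG − M(G))K) ≥ 0` for every skew-symmetric `K ∈ ℝ^{k×k}`. -/

theorem skew_quadratic_nonneg_of_localMax
    (n k : ℕ) (hk1 : 1 ≤ k) (hkn : k < n)
    (A : Matrix (Fin n) (Fin n) ℝ) (hA : A.PosDef)
    (D : Matrix (Fin n) (Fin k) ℝ)
    (G : Matrix (Fin n) (Fin k) ℝ)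
    (htr : Matrix.trace (Gᵀ * D) ≠ 0)
    (hloc : IsLocalMaxEta A D G) :
    ∀ K : Matrix (Fin k) (Fin k) ℝ, K = -Kᵀ →
      0 ≤ Matrix.trace (Kᵀ * (Gᵀ * A * G - Mmat A D G) * K) := by
  intro K hK
  classical
  have hKT : Kᵀ = -K := by simpa using congrArg Matrix.transpose hK
  obtain ⟨horth, ε, hεpos, hmaxeta⟩ := hloc
  set C : Matrix (Fin k) (Fin k) ℝ := Dᵀ * G with hC_def
  set a : ℝ := Matrix.trace (Gᵀ * D) with ha_def
  set τ : ℝ := Matrix.trace (Gᵀ * A * G) with hτ_def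
  have htau : 0 < τ := trace_conj_pos hk1 hA horth
  have haC : Matrix.trace C = a := by
    rw [hC_def, ha_def, ← Matrix.trace_transpose (Gᵀ * D), Matrix.transpose_mul,
      Matrix.transpose_transpose]
  set Q : ℝ → Matrix (Fin k) (Fin k) ℝ := fun t => NormedSpace.exp (t • K) with hQ_def
  -- orthogonality of Q t
  have hQT : ∀ t, (Q t)ᵀ = NormedSpace.exp (-(t • K)) := by
    intro t
    rw [hQ_def, ← Matrix.exp_transpose, transpose_smul, hKT, smul_neg]
  have hQ1 : ∀ t, (Q t)ᵀ * Q t = 1 := by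
    intro t
    rw [hQT, hQ_def,
      ← Matrix.exp_add_of_commute (-(t • K)) (t • K) (Commute.neg_left (Commute.refl _)),
      neg_add_cancel, NormedSpace.exp_zero]
  have hQ2 : ∀ t, Q t * (Q t)ᵀ = 1 := by
    intro t
    rw [hQT, hQ_def,
      ← Matrix.exp_add_of_commute (t • K) (-(t • K)) (Commute.neg_right (Commute.refl _)),
      add_neg_cancel, NormedSpace.exp_zero]
  have horth' : ∀ t, (G * Q t)ᵀ * (G * Q t) = 1 := by
    intro t
    rw [transpose_mul]
    calc (Q t)ᵀ * Gᵀ * (G * Q t) = (Q t)ᵀ * (Gᵀ * G) * Q t := by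
          simp only [Matrix.mul_assoc]
      _ = 1 := by rw [horth, Matrix.mul_one, hQ1]
  -- eta along the curve
  have hnum : ∀ t, Matrix.trace ((G * Q t)ᵀ * D) = Matrix.trace (Q t * C) := by
    intro t
    rw [← Matrix.trace_transpose ((G * Q t)ᵀ * D), Matrix.transpose_mul,
      Matrix.transpose_transpose, ← Matrix.mul_assoc, ← hC_def, Matrix.trace_mul_comm]
  have hden : ∀ t, Matrix.trace ((G * Q t)ᵀ * A * (G * Q t)) = τ := by
    intro t
    have e : (G * Q t)ᵀ * A * (G * Q t) = (Q t)ᵀ * (Gᵀ * A * G) * Q t := by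
      rw [transpose_mul]; simp only [Matrix.mul_assoc]
    rw [e, Matrix.trace_mul_comm, ← Matrix.mul_assoc, hQ2, Matrix.one_mul, hτ_def]
  have heta : ∀ t, eta A D (G * Q t) = (Matrix.trace (Q t * C)) ^ 2 / τ := by
    intro t
    rw [eta, hnum, hden]
  -- closeness
  have hclose : ∀ᶠ t in 𝓝 (0:ℝ), frobNorm (G * Q t - G) < ε := by
    have hQc : Continuous Q := by
      letI : NormedRing (Matrix (Fin k) (Fin k) ℝ) := Matrix.linftyOpNormedRing
      letI : NormedAlgebra ℝ (Matrix (Fin k) (Fin k) ℝ) := Matrix.linftyOpNormedAlgebra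
      letI : NormedAlgebra ℚ (Matrix (Fin k) (Fin k) ℝ) := .restrictScalars ℚ ℝ _
      exact NormedSpace.exp_continuous.comp (continuous_id.smul continuous_const)
    have hφ : Continuous (fun t : ℝ => frobNorm (G * Q t - G)) := by
      unfold frobNorm
      apply Real.continuous_sqrt.comp
      apply continuous_finset_sum
      intro i _
      apply continuous_finset_sum
      intro j _
      exact (((continuous_const.matrix_mul hQc).sub continuous_const).matrix_elem i j).pow 2
    have h0 : frobNorm (G * Q 0 - G) = 0 := by
      simp [hQ_def, frobNorm, NormedSpace.exp_zero]
    have h2 := hφ.tendsto 0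
    rw [h0] at h2
    exact h2.eventually_lt_const hεpos
  -- local max of the squared trace
  have hmax : IsLocalMax (fun t : ℝ =>
      Matrix.trace (NormedSpace.exp (t • K) * C) *
      Matrix.trace (NormedSpace.exp (t • K) * C)) 0 := by
    have hQ0 : Q 0 = 1 := by simp [hQ_def, NormedSpace.exp_zero]
    filter_upwards [hclose] with t ht
    have h3 := hmaxeta (G * Q t) (horth' t) ht
    rw [heta t, eta] at h3
    have h4 : (Matrix.trace (Q t * C)) ^ 2 ≤ a ^ 2 := by
      rw [div_le_div_iff₀ htau htau] at h3
      nlinarith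
    have h5 : Matrix.trace (Q 0 * C) = a := by rw [hQ0, Matrix.one_mul, haC]
    calc Matrix.trace (Q t * C) * Matrix.trace (Q t * C)
        = (Matrix.trace (Q t * C))^2 := by ring
      _ ≤ a ^ 2 := h4
      _ = Matrix.trace (Q 0 * C) * Matrix.trace (Q 0 * C) := by rw [h5]; ring
  have hkey : a * Matrix.trace (K * (K * C)) ≤ 0 := by
    have := key_ineq K C hmax
    rwa [haC] at this
  set q : ℝ := Matrix.trace (K * (K * C)) with hq_def
  -- algebraic reduction of the goal
  have hAt : Aᵀ = A := by
    have h := hA.1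
    ext i j
    have := congrFun (congrFun h i) j
    simpa using this
  have hW : (Gᵀ * A * G)ᵀ = Gᵀ * A * G := by
    rw [Matrix.transpose_mul, Matrix.transpose_mul, Matrix.transpose_transpose, hAt,
      Matrix.mul_assoc]
  have hsplit : Gᵀ * A * G - Mmat A D G =
      (xi A D G / 2) • (Gᵀ * D + Dᵀ * G) := by
    rw [Mmat, symPart, transpose_sub, transpose_smul, hW, Matrix.transpose_mul,
      Matrix.transpose_transpose]
    module
  rw [hsplit, Matrix.mul_smul, Matrix.smul_mul, Matrix.trace_smul, Matrix.mul_add,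
    Matrix.add_mul, Matrix.trace_add]
  have htrEq : Matrix.trace (Kᵀ * (Gᵀ * D) * K) = Matrix.trace (Kᵀ * (Dᵀ * G) * K) := by
    have e2 : (Kᵀ * (Dᵀ * G) * K)ᵀ = Kᵀ * (Gᵀ * D) * K := by
      rw [Matrix.transpose_mul, Matrix.transpose_mul, Matrix.transpose_transpose,
        Matrix.transpose_mul, Matrix.transpose_transpose]
      simp only [Matrix.mul_assoc]
    rw [← e2, Matrix.trace_transpose]
  have hT : Matrix.trace (Kᵀ * (Dᵀ * G) * K) = -q := by
    rw [hKT, Matrix.neg_mul, Matrix.neg_mul, Matrix.trace_neg, neg_inj, hq_def, hC_def,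
      Matrix.mul_assoc K (Dᵀ * G) K, Matrix.trace_mul_comm,
      Matrix.mul_assoc, Matrix.trace_mul_comm, Matrix.mul_assoc]
  rw [smul_eq_mul, htrEq, hT]
  have hxi : xi A D G = τ / a := by rw [xi]
  rw [hxi]
  have ha2 : (0:ℝ) < a ^ 2 := by positivity
  have h10 : 0 ≤ τ * (-(a * q)) := mul_nonneg htau.le (by linarith)
  have h11 : (τ / a / 2) * (-q + -q) = (τ * (-(a * q))) / a ^ 2 := by
    field_simp
    ring
  rw [h11]
  exact div_nonneg h10 ha2.le
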